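/- Let 𝒜 = {H_1,…,H_m} be an essential central hyperplane arrangement in ℝ^d (d ≥ 2) with nonzero normal vectors η_1,…,η_m, and let u be a unit vector such that for every subset S ⊆ {η_1,…,η_m} with dim span(S) ≤ d−1, the orthogonal projections of the vectors of S onto u^⊥ span a subspace of the same dimension as span(S). Let 𝒜′ be the arrangement in u^⊥ whose hyperplanes have normals the projections of η_1,…,η_m. Then the intersection poset L(𝒜′) is isomorphic, as a partially ordered set, to L(𝒜) with its coatoms (the elements of dimension 1, i.e., codimension d−1) removed. -/

import Mathlib

/-!
Formalization of statements from "Projection Volumes of Hyperplane Arrangements"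
by Klivans and Swartz.
-/

open scoped RealInnerProductSpace Pointwise
open MeasureTheory Metric Set

set_option linter.unusedSectionVars false

noncomputable section

attribute [local instance] Classical.decEq Classical.propDecidable

/-- Shorthand for the ambient Euclidean space `ℝ^d`. -/
abbrev Euc (d : ℕ) := EuclideanSpace ℝ (Fin d)

variable {E : Type*} [NormedAddCommGroup E] [InnerProductSpace ℝ E] [FiniteDimensional ℝ E]
  [MeasurableSpace E] [BorelSpace E]

/-- A (linear) hyperplane: the orthogonal complement of a nonzero vector,
i.e. a codimension-one linear subspace. -/
def IsLinearHyperplane (H : Submodule ℝ E) : Prop :=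
  ∃ η : E, η ≠ 0 ∧ H = (Submodule.span ℝ {η})ᗮ

/-- The intersection poset `L(𝒜)`: all intersections of subsets of `𝒜`
(the empty intersection being the whole space `⊤`), as a finset of subspaces.
It is ordered by *reverse* inclusion: `x ⊑ y` in `L(𝒜)` iff `y ≤ x` as submodules;
the minimal element `ℝ^d` is `⊤`. -/
def interPoset (A : Finset (Submodule ℝ E)) : Finset (Submodule ℝ E) :=
  A.powerset.image fun S => S.inf id

/-- The complement of the union of the hyperplanes of `𝒜`. -/
def hypComplement (A : Finset (Submodule ℝ E)) : Set E :=
  {z | ∀ H ∈ A, z ∉ H}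

/-- A region of `𝒜`: a connected component of the complement of the hyperplanes. -/
def IsRegion (A : Finset (Submodule ℝ E)) (C : Set E) : Prop :=
  ∃ z ∈ hypComplement A, C = connectedComponentIn (hypComplement A) z

/-- `p` is the nearest point of `C` to `z` (i.e. `p = π_C(z)`, the orthogonal
projection of `z` onto `C`; it is unique when `C` is nonempty, closed and convex). -/
def IsNearestPt (C : Set E) (z p : E) : Prop :=
  p ∈ C ∧ ∀ q ∈ C, dist z p ≤ dist z q

/-- A face of a convex set `C`: a nonempty exposed face (`C` itself included). -/
def IsFaceOf (C F : Set E) : Prop :=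
  F.Nonempty ∧ IsExposed ℝ C F

/-- The dimension of a set: the dimension of the direction space of its affine span. -/
def sdim (F : Set E) : ℕ := Module.finrank ℝ (vectorSpan ℝ F)

/-- `X_F`: the set of points `z` whose orthogonal projection onto `C` lies in the
relative interior (= intrinsic interior) of the face `F`. -/
def projRegion (C F : Set E) : Set E :=
  {z | ∃ p, IsNearestPt C z p ∧ p ∈ intrinsicInterior ℝ F}

/-- `ν_C(F)`: the fraction of the volume of the unit ball occupied by `X_F`. -/
def nuF (C F : Set E) : ℝ :=
  (volume (projRegion C F ∩ closedBall (0 : E) 1)).toReal /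
    (volume (closedBall (0 : E) 1)).toReal

/-- `ν_k(C)`: the sum of `ν_C(F)` over all `k`-dimensional faces `F` of `C`. -/
def nuK (C : Set E) (k : ℕ) : ℝ :=
  ∑ᶠ F ∈ {F | IsFaceOf C F ∧ sdim F = k}, nuF C F


/-- The orthogonal projection of `ℝ^d` onto the hyperplane `u^⊥` (for a unit vector `u`). -/
def projPerp (u x : E) : E := x - ⟪u, x⟫ • u


/-- `projPerp u` as a linear map. -/
def projL (u : E) : E →ₗ[ℝ] E where
  toFun x := projPerp u x
  map_add' x y := by
    simp only [projPerp, inner_add_right, add_smul]; abel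
  map_smul' c x := by
    simp only [projPerp, inner_smul_right, RingHom.id_apply, smul_sub, smul_smul]

lemma projL_apply (u x : E) : projL u x = projPerp u x := rfl

lemma span_orthogonal_eq_inf {m : ℕ} (v : Fin m → E) (S : Finset (Fin m)) :
    (Submodule.span ℝ (v '' ↑S))ᗮ = S.inf (fun i => (Submodule.span ℝ {v i})ᗮ) := by
  ext x
  simp only [Submodule.mem_finsetInf, Submodule.mem_orthogonal]
  constructor
  · intro h i hi
    intro y hy
    refine h y (Submodule.span_mono ?_ hy)
    rw [Set.singleton_subset_iff]
    exact ⟨i, hi, rfl⟩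
  · intro h y hy
    induction hy using Submodule.span_induction with
    | mem z hz =>
      obtain ⟨i, hi, rfl⟩ := hz
      exact h i hi _ (Submodule.mem_span_singleton_self _)
    | zero => simp
    | add a b _ _ ha hb => rw [inner_add_left, ha, hb, add_zero]
    | smul c a _ ha => rw [inner_smul_left, ha, mul_zero]

/-- from the proof of Lemma 6 of the paper.  Let `𝒜` be an essential
central arrangement in `ℝ^d` (`d ≥ 2`) with normals `η_1, …, η_m` and let `u` be a
generic unit vector (projection onto `u^⊥` preserves the rank of every subset of the
normals of rank `≤ d-1`).  Then the intersection poset of the projected arrangement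
`𝒜'` in `u^⊥` is isomorphic, as a poset (ordered by reverse inclusion, equivalently by
inclusion), to `L(𝒜)` with its coatoms (the one-dimensional elements) removed. -/
theorem projected_poset_is_truncation {d m : ℕ} (hd : 2 ≤ d)
    (eta : Fin m → Euc d) (heta : ∀ i, eta i ≠ 0)
    -- `𝒜` is essential: the normals span `ℝ^d`:
    (hess : Submodule.span ℝ (Set.range eta) = (⊤ : Submodule ℝ (Euc d)))
    (u : Euc d) (hu : ‖u‖ = 1)
    -- genericity of `u`: projecting onto `u^⊥` preserves the dimension of the span of
    -- every subset of the normals of rank at most `d - 1`: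
    (hgeneric : ∀ S : Set (Fin m),
      Module.finrank ℝ (Submodule.span ℝ (eta '' S)) ≤ d - 1 →
        Module.finrank ℝ (Submodule.span ℝ (projPerp u '' (eta '' S)))
          = Module.finrank ℝ (Submodule.span ℝ (eta '' S)))
    -- `L(𝒜)`: all intersections of subsets of the hyperplanes `η_i^⊥`:
    (L : Finset (Submodule ℝ (Euc d)))
    (hL : L = (Finset.univ : Finset (Fin m)).powerset.image
      (fun S => S.inf (fun i => (Submodule.span ℝ {eta i})ᗮ)))
    -- `L(𝒜')`: all intersections, inside `u^⊥`, of subsets of the hyperplanes of `u^⊥`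
    -- with normals the projections of the `η_i`:
    (L' : Finset (Submodule ℝ (Euc d)))
    (hL' : L' = (Finset.univ : Finset (Fin m)).powerset.image
      (fun S => (Submodule.span ℝ {u})ᗮ ⊓
        S.inf (fun i => (Submodule.span ℝ {projPerp u (eta i)})ᗮ))) :
    ∃ e : {x : Submodule ℝ (Euc d) // x ∈ L'} ≃
        {x : Submodule ℝ (Euc d) // x ∈ L.filter
          (fun x : Submodule ℝ (Euc d) => Module.finrank ℝ x ≠ 1)},
      ∀ a b, a.1 ≤ b.1 ↔ (e a).1 ≤ (e b).1 := by
  classical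
  have hu0 : u ≠ 0 := fun h => by simp [h] at hu
  have huu : ⟪u, u⟫ = (1 : ℝ) := by
    rw [real_inner_self_eq_norm_sq, hu, one_pow]
  have hfu : projL u u = (0 : Euc d) := by
    show u - ⟪u, u⟫ • u = 0
    rw [huu, one_smul, sub_self]
  set U : Submodule ℝ (Euc d) := Submodule.span ℝ {u} with hU
  set W : Finset (Fin m) → Submodule ℝ (Euc d) :=
    fun S => Submodule.span ℝ (eta '' ↑S) with hW
  have frEuc : Module.finrank ℝ (Euc d) = d := finrank_euclideanSpace_fin
  have hsum : ∀ S : Finset (Fin m),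
      Module.finrank ℝ (W S) + Module.finrank ℝ ((W S)ᗮ) = d := by
    intro S
    have h := Submodule.finrank_add_finrank_orthogonal (K := W S)
    rwa [frEuc] at h
  -- `projPerp` as a linear map identities
  have hmap : ∀ A : Set (Euc d),
      Submodule.span ℝ (projPerp u '' A) = Submodule.map (projL u) (Submodule.span ℝ A) := by
    intro A
    rw [Submodule.map_span]
    rfl
  -- genericity: `u` is not in the span of any small subfamily of normals
  have hgen' : ∀ S : Finset (Fin m), Module.finrank ℝ (W S) ≤ d - 1 → u ∉ W S := by
    intro S hrank humem
    have hg := hgeneric (↑S) hrank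
    rw [hmap] at hg
    set g : (W S) →ₗ[ℝ] Euc d := (projL u).comp (W S).subtype with hgdef
    have hrange : LinearMap.range g = Submodule.map (projL u) (W S) := by
      rw [hgdef, LinearMap.range_comp, Submodule.range_subtype]
    have hkermem : (⟨u, humem⟩ : W S) ∈ LinearMap.ker g := by
      simp [hgdef, LinearMap.mem_ker, hfu]
    have hkerne : LinearMap.ker g ≠ ⊥ := by
      intro h
      rw [h, Submodule.mem_bot] at hkermem
      exact hu0 (congrArg Subtype.val hkermem)
    have hker1 : Module.finrank ℝ (LinearMap.ker g) ≠ 0 :=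
      fun h => hkerne (Submodule.finrank_eq_zero.mp h)
    have hg2 : Module.finrank ℝ (Submodule.map (projL u) (W S)) = Module.finrank ℝ (W S) := hg
    have hrk := LinearMap.finrank_range_add_finrank_ker g
    rw [hrange] at hrk
    rw [hg2] at hrk
    omega
  -- the key reflection lemma
  have key : ∀ S T : Finset (Fin m), Module.finrank ℝ (W S) ≠ d - 1 →
      W T ≤ W S ⊔ U → W T ≤ W S := by
    intro S T hS hle
    by_cases htop : Module.finrank ℝ (W S) = d
    · have : W S = ⊤ := Submodule.eq_top_of_finrank_eq (by rw [frEuc]; exact htop)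
      rw [this]
      exact le_top
    · have hSd : Module.finrank ℝ (W S) ≤ d := by have := hsum S; omega
      have hS2 : Module.finrank ℝ (W S) ≤ d - 2 := by omega
      show Submodule.span ℝ (eta '' ↑T) ≤ W S
      rw [Submodule.span_le]
      rintro _ ⟨j, hj, rfl⟩
      have hmem : eta j ∈ W S ⊔ U := hle (Submodule.subset_span ⟨j, hj, rfl⟩)
      rw [Submodule.mem_sup] at hmem
      obtain ⟨y, hy, z, hz, hyz⟩ := hmem
      rw [hU, Submodule.mem_span_singleton] at hz
      obtain ⟨c, rfl⟩ := hz
      by_cases hc : c = 0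
      · rw [hc, zero_smul, add_zero] at hyz
        exact hyz ▸ hy
      · exfalso
        have hspan : W (insert j S) = Submodule.span ℝ {eta j} ⊔ W S := by
          show Submodule.span ℝ (eta '' ↑(insert j S)) = _
          rw [Finset.coe_insert, Set.image_insert_eq, Submodule.span_insert]
        have hr : Module.finrank ℝ (W (insert j S)) ≤ d - 1 := by
          have h1 : Module.finrank ℝ (W (insert j S))
              ≤ Module.finrank ℝ (Submodule.span ℝ {eta j}) + Module.finrank ℝ (W S) := by
            rw [hspan]
            have := Submodule.finrank_sup_add_finrank_inf_eq
              (Submodule.span ℝ {eta j}) (W S)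
            omega
          have h2 : Module.finrank ℝ (Submodule.span ℝ {eta j}) = 1 :=
            finrank_span_singleton (heta j)
          omega
        have hj1 : eta j ∈ W (insert j S) :=
          Submodule.subset_span ⟨j, by simp, rfl⟩
        have hy1 : y ∈ W (insert j S) := by
          rw [hspan]
          exact Submodule.mem_sup_right hy
        have hcu : c • u ∈ W (insert j S) := by
          have hsub := Submodule.sub_mem _ hj1 hy1
          rwa [← hyz, add_sub_cancel_left] at hsub
        have humem : u ∈ W (insert j S) := by
          have := Submodule.smul_mem _ c⁻¹ hcu
          rwa [smul_smul, inv_mul_cancel₀ hc, one_smul] at this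
        exact hgen' _ hr humem
  -- membership characterizations
  have hmemP : ∀ x : Submodule ℝ (Euc d),
      x ∈ L.filter (fun x : Submodule ℝ (Euc d) => Module.finrank ℝ x ≠ 1) ↔
        (∃ S : Finset (Fin m), x = (W S)ᗮ) ∧ Module.finrank ℝ x ≠ 1 := by
    intro x
    rw [Finset.mem_filter, hL, Finset.mem_image]
    constructor
    · rintro ⟨⟨S, _, rfl⟩, h1⟩
      exact ⟨⟨S, (span_orthogonal_eq_inf eta S).symm⟩, h1⟩
    · rintro ⟨⟨S, rfl⟩, h1⟩
      exact ⟨⟨S, Finset.mem_powerset.2 (Finset.subset_univ S),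
        (span_orthogonal_eq_inf eta S).symm⟩, h1⟩
  have hUmap : ∀ S : Finset (Fin m),
      U ⊔ Submodule.span ℝ (projPerp u '' (eta '' ↑S)) = U ⊔ W S := by
    intro S
    rw [hmap]
    apply le_antisymm
    · apply sup_le le_sup_left
      intro v hv
      rw [Submodule.mem_map] at hv
      obtain ⟨x, hx, rfl⟩ := hv
      have : projL u x = x - ⟪u, x⟫ • u := rfl
      rw [this]
      exact Submodule.sub_mem _ (Submodule.mem_sup_right hx)
        (Submodule.mem_sup_left (Submodule.smul_mem _ _ (Submodule.mem_span_singleton_self u)))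
    · apply sup_le le_sup_left
      intro x hx
      have hdecomp : x = projL u x + ⟪u, x⟫ • u := by
        show x = (x - ⟪u, x⟫ • u) + ⟪u, x⟫ • u
        abel
      rw [hdecomp]
      exact Submodule.add_mem _
        (Submodule.mem_sup_right (Submodule.mem_map_of_mem hx))
        (Submodule.mem_sup_left (Submodule.smul_mem _ _ (Submodule.mem_span_singleton_self u)))
  have hmemL' : ∀ x : Submodule ℝ (Euc d),
      x ∈ L' ↔ ∃ S : Finset (Fin m), x = (U ⊔ W S)ᗮ := by
    intro x
    have hform : ∀ S : Finset (Fin m),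
        (Submodule.span ℝ {u})ᗮ ⊓
          S.inf (fun i => (Submodule.span ℝ {projPerp u (eta i)})ᗮ) = (U ⊔ W S)ᗮ := by
      intro S
      rw [← span_orthogonal_eq_inf (fun i => projPerp u (eta i)) S]
      have himg : (fun i => projPerp u (eta i)) '' ↑S = projPerp u '' (eta '' ↑S) := by
        rw [Set.image_image]
      rw [himg, ← hU, Submodule.inf_orthogonal, hUmap]
    rw [hL', Finset.mem_image]
    constructor
    · rintro ⟨S, _, rfl⟩
      exact ⟨S, hform S⟩
    · rintro ⟨S, rfl⟩
      exact ⟨S, Finset.mem_powerset.2 (Finset.subset_univ S), hform S⟩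
  -- the reflection property of `x ↦ x ⊓ Uᗮ`
  have hrefl : ∀ x y : Submodule ℝ (Euc d),
      x ∈ L.filter (fun x : Submodule ℝ (Euc d) => Module.finrank ℝ x ≠ 1) →
      y ∈ L.filter (fun x : Submodule ℝ (Euc d) => Module.finrank ℝ x ≠ 1) →
      x ⊓ Uᗮ ≤ y ⊓ Uᗮ → x ≤ y := by
    intro x y hx hy hle
    obtain ⟨⟨S, rfl⟩, hx1⟩ := (hmemP x).1 hx
    obtain ⟨⟨T, rfl⟩, hy1⟩ := (hmemP y).1 hy
    rw [Submodule.inf_orthogonal, Submodule.inf_orthogonal] at hle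
    have h2 : W T ⊔ U ≤ W S ⊔ U := by
      have h3 := Submodule.orthogonal_le hle
      rwa [Submodule.orthogonal_orthogonal, Submodule.orthogonal_orthogonal] at h3
    have hS : Module.finrank ℝ (W S) ≠ d - 1 := by
      have := hsum S
      omega
    exact Submodule.orthogonal_le (key S T hS (le_trans le_sup_left h2))
  -- the map `x ↦ x ⊓ Uᗮ` is well defined
  have hgwd : ∀ x : Submodule ℝ (Euc d),
      x ∈ L.filter (fun x : Submodule ℝ (Euc d) => Module.finrank ℝ x ≠ 1) →
      x ⊓ Uᗮ ∈ L' := by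
    intro x hx
    obtain ⟨⟨S, rfl⟩, _⟩ := (hmemP x).1 hx
    rw [hmemL']
    exact ⟨S, by rw [Submodule.inf_orthogonal, sup_comm (W S) U]⟩
  -- surjectivity
  have hsurj : ∀ x' : Submodule ℝ (Euc d), x' ∈ L' →
      ∃ x, ∃ hx : x ∈ L.filter (fun x : Submodule ℝ (Euc d) => Module.finrank ℝ x ≠ 1),
        x ⊓ Uᗮ = x' := by
    intro x' hx'
    obtain ⟨S, rfl⟩ := (hmemL' x').1 hx'
    by_cases hr : Module.finrank ℝ (W S) + 1 ≤ d - 1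
    · refine ⟨(W S)ᗮ, ?_, ?_⟩
      · rw [hmemP]
        refine ⟨⟨S, rfl⟩, ?_⟩
        have := hsum S
        omega
      · rw [Submodule.inf_orthogonal, sup_comm (W S) U]
    · have htop : U ⊔ W S = ⊤ := by
        by_cases h0 : Module.finrank ℝ (W S) = d
        · have hWtop : W S = ⊤ := Submodule.eq_top_of_finrank_eq (by rw [frEuc]; exact h0)
          rw [hWtop, sup_top_eq]
        · have hd1 : Module.finrank ℝ (W S) = d - 1 := by
            have := hsum S
            omega
          have hnot : u ∉ W S := hgen' S (le_of_eq hd1)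
          have hlt : W S < U ⊔ W S := by
            refine lt_of_le_of_ne le_sup_right (fun h => hnot ?_)
            rw [h]
            exact Submodule.mem_sup_left (Submodule.mem_span_singleton_self u)
          have hlt2 : d - 1 < Module.finrank ℝ ↥(U ⊔ W S) := by
            rw [← hd1]
            exact Submodule.finrank_lt_finrank_of_lt hlt
          have hle2 : Module.finrank ℝ ↥(U ⊔ W S) ≤ d := by
            have h5 := Submodule.finrank_le (U ⊔ W S)
            rwa [frEuc] at h5
          exact Submodule.eq_top_of_finrank_eq (by rw [frEuc]; omega)
      refine ⟨⊥, ?_, ?_⟩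
      · rw [hmemP]
        constructor
        · refine ⟨Finset.univ, ?_⟩
          show (⊥ : Submodule ℝ (Euc d)) = (Submodule.span ℝ (eta '' ↑(Finset.univ : Finset (Fin m))))ᗮ
          rw [Finset.coe_univ, Set.image_univ, hess, Submodule.top_orthogonal_eq_bot]
        · rw [finrank_bot]
          omega
      · rw [htop, Submodule.top_orthogonal_eq_bot, bot_inf_eq]
  -- assemble the equivalence
  let g : {x : Submodule ℝ (Euc d) // x ∈ L.filter
        (fun x : Submodule ℝ (Euc d) => Module.finrank ℝ x ≠ 1)} →
      {x : Submodule ℝ (Euc d) // x ∈ L'} :=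
    fun x => ⟨x.1 ⊓ Uᗮ, hgwd x.1 x.2⟩
  have hbij : Function.Bijective g := by
    constructor
    · intro x y hxy
      have h1 : x.1 ⊓ Uᗮ = y.1 ⊓ Uᗮ := congrArg Subtype.val hxy
      exact Subtype.ext (le_antisymm
        (hrefl _ _ x.2 y.2 (le_of_eq h1)) (hrefl _ _ y.2 x.2 (le_of_eq h1.symm)))
    · rintro ⟨x', hx'⟩
      obtain ⟨x, hx, hxx'⟩ := hsurj x' hx'
      exact ⟨⟨x, hx⟩, Subtype.ext hxx'⟩
  refine ⟨(Equiv.ofBijective g hbij).symm, ?_⟩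
  intro a b
  have ha : a.1 = ((Equiv.ofBijective g hbij).symm a).1 ⊓ Uᗮ := by
    conv_lhs => rw [← Equiv.apply_symm_apply (Equiv.ofBijective g hbij) a]
    rfl
  have hb : b.1 = ((Equiv.ofBijective g hbij).symm b).1 ⊓ Uᗮ := by
    conv_lhs => rw [← Equiv.apply_symm_apply (Equiv.ofBijective g hbij) b]
    rfl
  constructor
  · intro h
    rw [ha, hb] at h
    exact hrefl _ _ ((Equiv.ofBijective g hbij).symm a).2
      ((Equiv.ofBijective g hbij).symm b).2 h
  · intro h
    rw [ha, hb]
    exact inf_le_inf_right _ h
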